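/- Let n ≥ 2 and k ≥ 1, and let G be the weighted coloured-edge graph with vertices v₁, …, v_n and k colours in which, for each pair i < j and each colour c, there is exactly one edge from v_i to v_j of colour c with weight 2^(j−1) − 2^(i−1), and there are no other edges. Then every path from v₁ to v_n has total weight (summed over all colours) equal to 2^(n−1) − 1, every path from v₁ to v_n is minimal, and the number of paths from v₁ to v_n is exactly k·(k+1)^(n−2); in particular the bound k·(k+1)^(n−2) on the total number of minimal paths is attained. -/

import Mathlib

open Classical

/-- A weighted coloured-edge graph: a directed multigraph with vertex set `V`,
edge type `E` (each edge `e` has an initial vertex `src e` and a terminal vertex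
`dst e`, and self-loops are excluded), a strictly positive real weight on each edge,
and a surjective colour function onto the colour set `M`. -/
structure WCEGraph (V : Type) (M : Type) where
  E : Type
  src : E → V
  dst : E → V
  wt : E → ℝ
  col : E → M
  wt_pos : ∀ e, 0 < wt e
  no_loop : ∀ e, src e ≠ dst e
  col_surj : Function.Surjective col

namespace WCEGraph

variable {V M : Type} (G : WCEGraph V M)

/-- `p` is a path from `u` to `v`: a nonempty finite sequence of edges, each edge's
terminal vertex being the next edge's initial vertex, starting at `u` and ending at `v`. -/
def IsPath (u v : V) (p : List G.E) : Prop :=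
  p ≠ [] ∧ (∀ e ∈ p.head?, G.src e = u) ∧ (∀ e ∈ p.getLast?, G.dst e = v) ∧
    p.Chain' (fun a b => G.dst a = G.src b)

/-- The weight `ω_c(p)` of the path `p` in colour `c`: the sum of the weights of
those edges of `p` having colour `c`. -/
noncomputable def colWeight (c : M) (p : List G.E) : ℝ :=
  (p.map (fun e => if G.col e = c then G.wt e else 0)).sum

/-- The preorder on paths: `p ≤ q` iff the weight of `p` in each colour is at most
that of `q`. -/
def pathLE (p q : List G.E) : Prop :=
  ∀ c : M, G.colWeight c p ≤ G.colWeight c q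

/-- `p` is a minimal path from `u` to `v`: every path `q` from `u` to `v` with
`q ≤ p` has the same weight as `p` in every colour. -/
def IsMinimal (u v : V) (p : List G.E) : Prop :=
  G.IsPath u v p ∧
    ∀ q, G.IsPath u v q → G.pathLE q p → ∀ c : M, G.colWeight c q = G.colWeight c p

end WCEGraph

/-- The graph with vertices `v₁, …, v_n` (represented by `Fin n`, so `v_i` is `i - 1`)
and `k` colours, in which for each pair `i < j` and each colour `c` there is exactly
one edge from `v_i` to `v_j` of colour `c`, with weight `2 ^ (j - 1) - 2 ^ (i - 1)`. -/
noncomputable def fullChainGraph (n k : ℕ) (hn : 2 ≤ n) : WCEGraph (Fin n) (Fin k) where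
  E := {q : Fin n × Fin n // q.1 < q.2} × Fin k
  src e := e.1.1.1
  dst e := e.1.1.2
  wt e := 2 ^ (e.1.1.2 : ℕ) - 2 ^ (e.1.1.1 : ℕ)
  col e := e.2
  wt_pos e := by
    have h : (e.1.1.1 : ℕ) < (e.1.1.2 : ℕ) := e.1.2
    have : (2 : ℝ) ^ (e.1.1.1 : ℕ) < 2 ^ (e.1.1.2 : ℕ) := by
      exact pow_lt_pow_right₀ one_lt_two h
    try dsimp only
    linarith
  no_loop e := e.1.2.ne
  col_surj c := ⟨(⟨(⟨0, by omega⟩, ⟨1, by omega⟩), by simp⟩, c), rfl⟩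

namespace FCGAux

variable {n k : ℕ}

abbrev Edg (n k : ℕ) := {q : Fin n × Fin n // q.1 < q.2} × Fin k

lemma tele : ∀ (p : List (Edg n k)) (a : Fin n), p ≠ [] →
    (∀ e ∈ p.head?, e.1.1.1 = a) →
    List.Chain' (fun x y : Edg n k => x.1.1.2 = y.1.1.1) p →
    ∀ b : Fin n, (∀ e ∈ p.getLast?, e.1.1.2 = b) →
    (p.map (fun e : Edg n k => (2:ℝ)^(e.1.1.2:ℕ) - 2^(e.1.1.1:ℕ))).sum
      = 2^(b:ℕ) - 2^(a:ℕ)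
  | [], _, h, _, _, _, _ => absurd rfl h
  | [x], a, _, hh, _, b, hl => by
      have h1 : x.1.1.1 = a := hh x rfl
      have h2 : x.1.1.2 = b := hl x (by simp)
      simp [h1, h2]
  | x :: y :: t, a, _, hh, hc, b, hl => by
      have h1 : x.1.1.1 = a := hh x rfl
      have hc' := List.isChain_cons_cons.mp hc
      have ih := tele (y :: t) x.1.1.2 (by simp)
        (by intro e he; simp at he; subst he; exact hc'.1.symm) hc'.2 b
        (by rw [List.getLast?_cons_cons] at hl; exact hl)
      simp only [List.map_cons, List.sum_cons] at ih ⊢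
      rw [ih, h1]; ring

lemma dst_chain' (p : List (Edg n k))
    (hc : p.Chain' (fun x y : Edg n k => x.1.1.2 = y.1.1.1)) :
    (p.map (fun e : Edg n k => e.1.1.2)).Chain' (· < ·) := by
  refine (List.isChain_map _).mpr ?_
  exact hc.imp (fun {x y} (h : x.1.1.2 = y.1.1.1) => h ▸ y.1.2)

lemma dst_sorted (p : List (Edg n k))
    (hc : p.Chain' (fun x y : Edg n k => x.1.1.2 = y.1.1.1)) :
    (p.map (fun e : Edg n k => e.1.1.2)).Pairwise (· < ·) :=
  List.isChain_iff_pairwise.mp (dst_chain' p hc)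

noncomputable def encF (p : List (Edg n k)) (v : Fin n) : Option (Fin k) :=
  ((p.filter (fun e => e.1.1.2 = v)).head?).map (fun e => e.2)

lemma encF_eq_none_iff (p : List (Edg n k)) (v : Fin n) :
    encF p v = none ↔ ∀ e ∈ p, e.1.1.2 ≠ v := by
  simp [encF, Option.map_eq_none_iff, List.head?_eq_none_iff, List.filter_eq_nil_iff]

lemma encF_mem : ∀ (p : List (Edg n k)),
    (p.map (fun e : Edg n k => e.1.1.2)).Nodup →
    ∀ e ∈ p, encF p e.1.1.2 = some e.2
  | [], _, e, he => absurd he (by simp)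
  | x :: t, hnd, e, he => by
      rcases List.mem_cons.mp he with h | h
      · subst h
        simp [encF, List.filter_cons]
      · have hx : x.1.1.2 ≠ e.1.1.2 := by
          intro hx
          have : e.1.1.2 ∈ t.map (fun e : Edg n k => e.1.1.2) :=
            List.mem_map.mpr ⟨e, h, rfl⟩
          rw [List.map_cons] at hnd
          exact (List.nodup_cons.mp hnd).1 (hx ▸ this)
        have ih := encF_mem t (by rw [List.map_cons] at hnd; exact (List.nodup_cons.mp hnd).2) e h
        simpa [encF, List.filter_cons, hx] using ih

lemma mem_dst_iff (p : List (Edg n k)) (v : Fin n) :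
    v ∈ p.map (fun e : Edg n k => e.1.1.2) ↔ encF p v ≠ none := by
  rw [Ne, encF_eq_none_iff]
  push_neg
  simp only [List.mem_map]

lemma path_eq : ∀ (p q : List (Edg n k)) (a : Fin n),
    (∀ e ∈ p.head?, e.1.1.1 = a) → (∀ e ∈ q.head?, e.1.1.1 = a) →
    p.Chain' (fun x y : Edg n k => x.1.1.2 = y.1.1.1) →
    q.Chain' (fun x y : Edg n k => x.1.1.2 = y.1.1.1) →
    p.map (fun e : Edg n k => (e.1.1.2, (some e.2 : Option (Fin k))))
      = q.map (fun e : Edg n k => (e.1.1.2, (some e.2 : Option (Fin k)))) →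
    p = q
  | [], [], _, _, _, _, _, _ => rfl
  | [], y :: q, _, _, _, _, _, h => by simp at h
  | x :: p, [], _, _, _, _, _, h => by simp at h
  | x :: p, y :: q, a, hp, hq, hcp, hcq, h => by
      simp only [List.map_cons, List.cons.injEq, Prod.mk.injEq, Option.some.injEq] at h
      have hd : x.1.1.2 = y.1.1.2 := h.1.1
      have hcol : x.2 = y.2 := h.1.2
      have hs : x.1.1.1 = y.1.1.1 := (hp x rfl).trans (hq y rfl).symm
      have hxy : x = y := by
        ext <;> simp [hs, hd, hcol]
      subst hxy
      have hcp' := List.isChain_cons.mp hcp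
      have hcq' := List.isChain_cons.mp hcq
      have := path_eq p q x.1.1.2
        (fun e he => (hcp'.1 e he).symm) (fun e he => (hcq'.1 e he).symm)
        hcp'.2 hcq'.2 (by simpa using h.2)
      rw [this]

def build (g : Fin n → Option (Fin k)) (c0 : Fin k) : Fin n → List (Fin n) → List (Edg n k)
  | _, [] => []
  | a, v :: t => if h : a < v then (⟨(a, v), h⟩, (g v).getD c0) :: build g c0 v t
                 else build g c0 a t

lemma build_map_dst (g : Fin n → Option (Fin k)) (c0 : Fin k) :
    ∀ (l : List (Fin n)) (a : Fin n), List.Chain (· < ·) a l →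
    (build g c0 a l).map (fun e : Edg n k => e.1.1.2) = l
  | [], _, _ => rfl
  | v :: t, a, hch => by
      have h := List.chain_cons.mp hch
      rw [build, dif_pos h.1, List.map_cons, build_map_dst g c0 t v h.2]

lemma build_head (g : Fin n → Option (Fin k)) (c0 : Fin k) (l : List (Fin n)) (a : Fin n)
    (hch : List.Chain (· < ·) a l) :
    ∀ e ∈ (build g c0 a l).head?, e.1.1.1 = a := by
  cases l with
  | nil => simp [build]
  | cons v t =>
      have h := List.chain_cons.mp hch
      rw [build, dif_pos h.1]
      intro e he
      simp at he
      subst he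
      rfl

lemma build_chain' (g : Fin n → Option (Fin k)) (c0 : Fin k) :
    ∀ (l : List (Fin n)) (a : Fin n), List.Chain (· < ·) a l →
    (build g c0 a l).Chain' (fun x y : Edg n k => x.1.1.2 = y.1.1.1)
  | [], _, _ => List.isChain_nil
  | v :: t, a, hch => by
      have h := List.chain_cons.mp hch
      rw [build, dif_pos h.1]
      refine List.isChain_cons.mpr ⟨?_, build_chain' g c0 t v h.2⟩
      intro e he
      exact (build_head g c0 t v h.2 e he).symm

lemma build_col (g : Fin n → Option (Fin k)) (c0 : Fin k) :
    ∀ (l : List (Fin n)) (a : Fin n), ∀ e ∈ build g c0 a l, e.2 = (g e.1.1.2).getD c0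
  | [], _, e, he => absurd he (by simp [build])
  | v :: t, a, e, he => by
      rw [build] at he
      split_ifs at he with h
      · rcases List.mem_cons.mp he with h' | h'
        · subst h'; rfl
        · exact build_col g c0 t v e h'
      · exact build_col g c0 t a e he

def marked (g : Fin n → Option (Fin k)) : List (Fin n) :=
  (List.finRange n).filter (fun v => (g v).isSome)

lemma marked_pairwise (g : Fin n → Option (Fin k)) : (marked g).Pairwise (· < ·) :=
  (List.pairwise_lt_finRange n).filter _

lemma mem_marked (g : Fin n → Option (Fin k)) (v : Fin n) :
    v ∈ marked g ↔ (g v).isSome := by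
  simp [marked, List.mem_filter]

lemma getLast?_of_sorted_max : ∀ (l : List (Fin n)), l.Pairwise (· < ·) →
    ∀ x ∈ l, (∀ y ∈ l, y ≤ x) → l.getLast? = some x
  | [], _, x, hx, _ => absurd hx (by simp)
  | [v], _, x, hx, _ => by simp at hx; subst hx; rfl
  | v :: w :: t, hp, x, hx, hmax => by
      rw [List.getLast?_cons_cons]
      have hvw : v < w := (List.pairwise_cons.mp hp).1 w (by simp)
      have hxt : x ∈ w :: t := by
        rcases List.mem_cons.mp hx with h | h
        · exfalso
          have := hmax w (by simp)
          subst h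
          exact absurd this (not_le.mpr hvw)
        · exact h
      exact getLast?_of_sorted_max (w :: t) (List.pairwise_cons.mp hp).2 x hxt
        (fun y hy => hmax y (List.mem_cons_of_mem _ hy))

lemma sum_colWeight (hn : 2 ≤ n) (p : List (Edg n k)) :
    ∑ c : Fin k, (fullChainGraph n k hn).colWeight c p
      = (p.map (fun e : Edg n k => (2:ℝ)^(e.1.1.2:ℕ) - 2^(e.1.1.1:ℕ))).sum := by
  induction p with
  | nil => exact Finset.sum_eq_zero (fun c _ => rfl)
  | cons x t ih =>
      have hstep : ∀ c : Fin k, (fullChainGraph n k hn).colWeight c (x :: t)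
          = (if x.2 = c then (2:ℝ)^(x.1.1.2:ℕ) - 2^(x.1.1.1:ℕ) else 0)
            + (fullChainGraph n k hn).colWeight c t := by
        intro c
        simp [WCEGraph.colWeight, fullChainGraph]
        congr 1
      refine (Finset.sum_congr rfl (fun c _ => hstep c)).trans ?_
      rw [Finset.sum_add_distrib, ih]
      rw [Finset.sum_ite_eq]
      simp

/-- Existence of a path realizing a given colour-marking function. -/
lemma exists_path (hn : 2 ≤ n) (hk : 1 ≤ k) (g : Fin n → Option (Fin k))
    (h0 : g ⟨0, Nat.zero_lt_of_lt hn⟩ = none) (hl : g ⟨n - 1, Nat.sub_one_lt_of_lt hn⟩ ≠ none) :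
    ∃ p : List (Edg n k),
      (fullChainGraph n k hn).IsPath ⟨0, Nat.zero_lt_of_lt hn⟩ ⟨n - 1, Nat.sub_one_lt_of_lt hn⟩ p ∧ encF p = g := by
  set z : Fin n := ⟨0, Nat.zero_lt_of_lt hn⟩ with hz
  set w : Fin n := ⟨n - 1, Nat.sub_one_lt_of_lt hn⟩ with hw
  set c0 : Fin k := ⟨0, hk⟩ with hc0
  have hchain : List.Chain (· < ·) z (marked g) := by
    rw [List.Chain, List.isChain_iff_pairwise, List.pairwise_cons]
    refine ⟨?_, marked_pairwise g⟩
    intro v hv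
    have hvs : (g v).isSome := (mem_marked g v).mp hv
    have : v ≠ z := by
      intro h
      rw [h, hz, h0] at hvs
      simp at hvs
    rw [Fin.lt_def]
    have hzv : (z : ℕ) = 0 := rfl
    have hvv : (v : ℕ) ≠ 0 := fun h => this (Fin.ext (by rw [h, hzv]))
    omega
  have hmemw : w ∈ marked g := (mem_marked g w).mpr (Option.ne_none_iff_isSome.mp hl)
  have hlast : (marked g).getLast? = some w :=
    getLast?_of_sorted_max _ (marked_pairwise g) w hmemw
      (fun y _ => by
        have hwv : (w : ℕ) = n - 1 := rfl
        rw [Fin.le_def, hwv]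
        have := y.2
        omega)
  set p : List (Edg n k) := build g c0 z (marked g) with hp
  have hmap : p.map (fun e : Edg n k => e.1.1.2) = marked g :=
    build_map_dst g c0 (marked g) z hchain
  have hnd : (p.map (fun e : Edg n k => e.1.1.2)).Nodup := by
    rw [hmap]
    exact (marked_pairwise g).imp (fun h => ne_of_lt h)
  have hne : p ≠ [] := by
    intro h
    rw [h] at hmap
    rw [← hmap] at hmemw
    simp at hmemw
  have hlastp : ∀ e ∈ p.getLast?, e.1.1.2 = w := by
    intro e he
    have : (p.map (fun e : Edg n k => e.1.1.2)).getLast? = some w := by rw [hmap]; exact hlast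
    rw [List.getLast?_map] at this
    rw [he] at this
    simpa using this
  have hcols : ∀ e ∈ p, e.2 = (g e.1.1.2).getD c0 := build_col g c0 (marked g) z
  refine ⟨p, ⟨hne, build_head g c0 (marked g) z hchain, hlastp,
    build_chain' g c0 (marked g) z hchain⟩, ?_⟩
  funext v
  by_cases hv : (g v).isSome
  · have hvm : v ∈ p.map (fun e : Edg n k => e.1.1.2) := by
      rw [hmap]; exact (mem_marked g v).mpr hv
    obtain ⟨e, he, hev⟩ := List.mem_map.mp hvm
    obtain ⟨c, hc⟩ := Option.isSome_iff_exists.mp hv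
    rw [← hev, encF_mem p hnd e he, hcols e he, hev, hc]
    simp
  · have hvn : g v = none := Option.not_isSome_iff_eq_none.mp hv
    rw [hvn, encF_eq_none_iff]
    intro e he heq
    have : e.1.1.2 ∈ marked g := by rw [← hmap]; exact List.mem_map.mpr ⟨e, he, rfl⟩
    rw [heq, mem_marked, hvn] at this
    simp at this

/-- The counting equivalence. -/
noncomputable def countEquiv (n k : ℕ) (hn : 2 ≤ n) :
    {g : Fin n → Option (Fin k) // g ⟨0, by omega⟩ = none ∧ g ⟨n - 1, by omega⟩ ≠ none}
      ≃ (Fin (n - 2) → Option (Fin k)) × Fin k where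
  toFun g := (fun i => g.1 ⟨i.1 + 1, by have := i.2; omega⟩,
    (g.1 ⟨n - 1, by omega⟩).get (Option.ne_none_iff_isSome.mp g.2.2))
  invFun fc := ⟨fun v => if h1 : (v : ℕ) = 0 then none
      else if h2 : (v : ℕ) = n - 1 then some fc.2
      else fc.1 ⟨(v : ℕ) - 1, by have := v.2; omega⟩,
    by simp, by
      show (if h1 : ((⟨n - 1, by omega⟩ : Fin n) : ℕ) = 0 then none
        else if h2 : ((⟨n - 1, by omega⟩ : Fin n) : ℕ) = n - 1 then some fc.2
        else fc.1 ⟨((⟨n - 1, by omega⟩ : Fin n) : ℕ) - 1, by omega⟩) ≠ none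
      rw [dif_neg (by show ¬ (n - 1 = 0); omega), dif_pos (by rfl)]
      simp⟩
  left_inv := by
    rintro ⟨g, h0, hl⟩
    apply Subtype.ext
    funext v
    dsimp only
    split_ifs with h1 h2
    · have : v = (⟨0, by omega⟩ : Fin n) := Fin.ext h1
      rw [this, h0]
    · have : v = (⟨n - 1, by omega⟩ : Fin n) := Fin.ext h2
      rw [this, Option.some_get]
    · congr 1
      exact Fin.ext (by simp; omega)
  right_inv := by
    rintro ⟨f, c⟩
    dsimp only
    refine Prod.ext ?_ ?_
    · funext i
      have hi := i.2
      show (if h1 : ((⟨(i : ℕ) + 1, by omega⟩ : Fin n) : ℕ) = 0 then none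
        else if h2 : ((⟨(i : ℕ) + 1, by omega⟩ : Fin n) : ℕ) = n - 1 then some c
        else f ⟨((⟨(i : ℕ) + 1, by omega⟩ : Fin n) : ℕ) - 1, by omega⟩) = f i
      rw [dif_neg (by show ¬ ((i : ℕ) + 1 = 0); omega),
        dif_neg (by show ¬ ((i : ℕ) + 1 = n - 1); omega)]
      exact congrArg f (Fin.ext (by simp))
    · apply Option.get_of_mem
      rw [Option.mem_def]
      rw [dif_neg (by show ¬ (n - 1 = 0); omega), dif_pos (by rfl)]

end FCGAux

set_option maxHeartbeats 1600000 in
open FCGAux in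
/-- In the graph with `n ≥ 2` vertices and `k ≥ 1` colours having, for
each `i < j` and each colour, one edge from `v_i` to `v_j` of weight
`2 ^ (j - 1) - 2 ^ (i - 1)`, every path from `v₁` to `v_n` has total weight (summed over
all colours) `2 ^ (n - 1) - 1`, every path from `v₁` to `v_n` is minimal, and there are
exactly `k * (k + 1) ^ (n - 2)` paths from `v₁` to `v_n`: the bound is attained. -/
theorem fullChainGraph_all_paths_minimal (n k : ℕ) (hn : 2 ≤ n) (hk : 1 ≤ k) :
    (∀ p : List (fullChainGraph n k hn).E,
      (fullChainGraph n k hn).IsPath ⟨0, by omega⟩ ⟨n - 1, by omega⟩ p →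
        (∑ c : Fin k, (fullChainGraph n k hn).colWeight c p) = 2 ^ (n - 1) - 1) ∧
    (∀ p : List (fullChainGraph n k hn).E,
      (fullChainGraph n k hn).IsPath ⟨0, by omega⟩ ⟨n - 1, by omega⟩ p →
        (fullChainGraph n k hn).IsMinimal ⟨0, by omega⟩ ⟨n - 1, by omega⟩ p) ∧
    {p : List (fullChainGraph n k hn).E |
        (fullChainGraph n k hn).IsPath ⟨0, by omega⟩ ⟨n - 1, by omega⟩ p}.Finite ∧
    {p : List (fullChainGraph n k hn).E |
        (fullChainGraph n k hn).IsPath ⟨0, by omega⟩ ⟨n - 1, by omega⟩ p}.ncard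
      = k * (k + 1) ^ (n - 2) := by
  set G := fullChainGraph n k hn with hG
  set z : Fin n := ⟨0, by omega⟩ with hz
  set w : Fin n := ⟨n - 1, by omega⟩ with hw
  -- Part 1
  have part1 : ∀ p : List (Edg n k), G.IsPath z w p →
      (∑ c : Fin k, G.colWeight c p) = 2 ^ (n - 1) - 1 := by
    intro p hp
    obtain ⟨hne, hh, hl, hc⟩ := hp
    have htele := tele p z hne hh hc w hl
    rw [sum_colWeight hn p, htele]
    norm_num
    rfl
  -- Part 2
  have part2 : ∀ p : List (Edg n k), G.IsPath z w p → G.IsMinimal z w p := by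
    intro p hp
    refine ⟨hp, ?_⟩
    intro q hq hle c
    have h1 := part1 p hp
    have h2 := part1 q hq
    have hsum : ∑ c : Fin k, (G.colWeight c p - G.colWeight c q) = 0 := by
      rw [Finset.sum_sub_distrib, h1, h2]
      ring
    have hzero := (Finset.sum_eq_zero_iff_of_nonneg
      (fun c _ => sub_nonneg.mpr (hle c))).mp hsum c (Finset.mem_univ c)
    linarith
  -- Part 3
  set S : Set (List (Edg n k)) := {p | G.IsPath z w p} with hS
  set F := {g : Fin n → Option (Fin k) // g ⟨0, by omega⟩ = none ∧ g ⟨n - 1, by omega⟩ ≠ none}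
    with hF
  have enc0 : ∀ p ∈ S, encF p z = none := by
    intro p _
    rw [encF_eq_none_iff]
    intro e _ heq
    have h2 := e.1.2
    rw [heq] at h2
    have h3 : (e.1.1.1 : ℕ) < (z : ℕ) := h2
    have hzv : (z : ℕ) = 0 := rfl
    omega
  have encl : ∀ p ∈ S, encF p w ≠ none := by
    intro p hp hnone
    obtain ⟨hne, _, hl, _⟩ := hp
    rw [encF_eq_none_iff] at hnone
    exact hnone (p.getLast hne) (List.getLast_mem hne)
      (hl (p.getLast hne) (by exact List.getLast?_eq_getLast hne))
  set Φ : ↥S → F := fun p => ⟨encF p.1, enc0 p.1 p.2, encl p.1 p.2⟩ with hΦ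
  have hinj : Function.Injective Φ := by
    rintro ⟨p, hp⟩ ⟨q, hq⟩ hpq
    have henc : encF p = encF q := congrArg Subtype.val hpq
    obtain ⟨hnep, hhp, hlp, hcp⟩ := hp
    obtain ⟨hneq, hhq, hlq, hcq⟩ := hq
    have hsp := dst_sorted p hcp
    have hsq := dst_sorted q hcq
    have hndp : (p.map (fun e : Edg n k => e.1.1.2)).Nodup := hsp.imp (fun h => ne_of_lt h)
    have hndq : (q.map (fun e : Edg n k => e.1.1.2)).Nodup := hsq.imp (fun h => ne_of_lt h)
    haveI : IsAntisymm (Fin n) (· < ·) := ⟨fun a b h1 h2 => absurd h2 (asymm h1)⟩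
    have hperm := (List.perm_ext_iff_of_nodup hndp hndq).mpr
      (fun v => by rw [mem_dst_iff, mem_dst_iff, henc])
    have hdst : p.map (fun e : Edg n k => e.1.1.2) = q.map (fun e : Edg n k => e.1.1.2) :=
      hperm.eq_of_pairwise (fun a b _ _ h1 h2 => absurd h2 (asymm h1)) hsp hsq
    have hmp : p.map (fun e : Edg n k => (e.1.1.2, (some e.2 : Option (Fin k))))
        = (p.map (fun e : Edg n k => e.1.1.2)).map (fun v => (v, encF p v)) := by
      rw [List.map_map]
      exact List.map_congr_left (fun e he => by
        simp [Function.comp, encF_mem p hndp e he])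
    have hmq : q.map (fun e : Edg n k => (e.1.1.2, (some e.2 : Option (Fin k))))
        = (q.map (fun e : Edg n k => e.1.1.2)).map (fun v => (v, encF q v)) := by
      rw [List.map_map]
      exact List.map_congr_left (fun e he => by
        simp [Function.comp, encF_mem q hndq e he])
    have : p = q := path_eq p q z hhp hhq hcp hcq (by rw [hmp, hmq, hdst, henc])
    exact Subtype.ext this
  have hsurj : Function.Surjective Φ := by
    rintro ⟨g, h0, hl⟩
    obtain ⟨p, hp, hpe⟩ := exists_path hn hk g h0 hl
    exact ⟨⟨p, hp⟩, Subtype.ext hpe⟩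
  haveI : Finite F := Finite.of_equiv _ (countEquiv n k hn).symm
  haveI hSfin : Finite ↥S := Finite.of_injective Φ hinj
  have hfin : S.Finite := Set.toFinite S
  refine ⟨part1, part2, hfin, ?_⟩
  have hcard1 : Nat.card ↥S = Nat.card F := Nat.card_eq_of_bijective Φ ⟨hinj, hsurj⟩
  have hcard2 : Nat.card F = Nat.card ((Fin (n - 2) → Option (Fin k)) × Fin k) :=
    Nat.card_congr (countEquiv n k hn)
  rw [← Nat.card_coe_set_eq, show {p | G.IsPath z w p} = S from hS.symm]
  refine hcard1.trans ?_
  rw [hcard2, Nat.card_prod, Nat.card_fun]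
  have ho : Nat.card (Option (Fin k)) = k + 1 := by
    simp [Nat.card_eq_fintype_card]
  have hf : Nat.card (Fin k) = k := by simp [Nat.card_eq_fintype_card]
  have hf2 : Nat.card (Fin (n - 2)) = n - 2 := by simp [Nat.card_eq_fintype_card]
  rw [ho, hf, hf2, mul_comm]
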